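/- (Weil's theorem, finite restriction version) There is no nonzero σ-additive Borel measure μ on an infinite-dimensional separable real Hilbert space E that is translation invariant and assigns finite positive measure to some open ball: if μ is translation invariant (μ(A + h) = μ(A) for all Borel A and h ∈ E) and μ(B) < ∞ for every open ball B, then μ = 0. -/

import Mathlib

open MeasureTheory

/-- Weil's theorem (finite-on-balls version): on an infinite-dimensional
separable real Hilbert space there is no nonzero translation-invariant Borel
measure which is finite on open balls. -/
theorem stmt3 {E : Type*} [NormedAddCommGroup E] [InnerProductSpace ℝ E]
    [CompleteSpace E] [TopologicalSpace.SeparableSpace E]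
    [MeasurableSpace E] [BorelSpace E]
    (hinf : ¬ FiniteDimensional ℝ E)
    (μ : Measure E)
    (hinv : ∀ (A : Set E) (h : E), MeasurableSet A → μ ((fun a => a + h) '' A) = μ A)
    (hball : ∀ (x : E) (r : ℝ), 0 < r → μ (Metric.ball x r) < ⊤) :
    μ = 0 := by
  -- translation invariance for balls
  have hb : ∀ (x : E) (r : ℝ), μ (Metric.ball x r) = μ (Metric.ball 0 r) := by
    intro x r
    have := hinv (Metric.ball 0 r) x measurableSet_ball
    have himg : (fun a => a + x) '' Metric.ball 0 r = Metric.ball x r := by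
      ext y
      constructor
      · rintro ⟨z, hz, rfl⟩
        simpa [Metric.mem_ball, dist_eq_norm] using hz
      · intro hy
        refine ⟨y - x, ?_, sub_add_cancel y x⟩
        simpa [Metric.mem_ball, dist_eq_norm] using hy
    rw [himg] at this
    exact this
  obtain ⟨R, f, hR, hfR, hfd⟩ := exists_seq_norm_le_one_le_norm_sub hinf (𝕜 := ℝ)
  -- the small balls are pairwise disjoint
  have hdisj : Pairwise (Function.onFun Disjoint fun n => Metric.ball (f n) (1/2)) := by
    intro m n hmn
    refine Metric.ball_disjoint_ball ?_
    have := hfd hmn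
    rw [dist_eq_norm]
    linarith
  -- they sit inside a big ball
  have hsub : ∀ n, Metric.ball (f n) (1/2) ⊆ Metric.ball 0 (R + 1) := by
    intro n y hy
    rw [Metric.mem_ball] at hy ⊢
    have : dist y 0 ≤ dist y (f n) + dist (f n) 0 := dist_triangle _ _ _
    have h2 : dist (f n) 0 ≤ R := by simpa [dist_eq_norm] using hfR n
    linarith
  have hsum : ∑' n : ℕ, μ (Metric.ball (f n) (1/2)) ≤ μ (Metric.ball 0 (R + 1)) := by
    rw [← measure_iUnion hdisj (fun n => measurableSet_ball)]
    exact measure_mono (Set.iUnion_subset hsub)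
  have hconst : ∀ n : ℕ, μ (Metric.ball (f n) (1/2)) = μ (Metric.ball 0 (1/2)) :=
    fun n => hb _ _
  have hzero : μ (Metric.ball 0 (1/2 : ℝ)) = 0 := by
    by_contra hne
    rw [tsum_congr hconst, ENNReal.tsum_const_eq_top_of_ne_zero hne] at hsum
    exact absurd (top_le_iff.mp hsum) (hball 0 (R + 1) (by linarith)).ne
  -- every half-ball has measure zero, cover E by countably many
  obtain ⟨s, hs_count, hs_dense⟩ := TopologicalSpace.exists_countable_dense E
  have hcover : (Set.univ : Set E) ⊆ ⋃ x ∈ s, Metric.ball x (1/2) := by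
    intro y _
    obtain ⟨x, hx1, hx2⟩ := Metric.dense_iff.mp hs_dense y (1/2) (by norm_num)
    exact Set.mem_biUnion hx2 (by simpa [Metric.mem_ball, dist_comm] using hx1)
  have huniv : μ Set.univ = 0 := by
    refine le_antisymm ?_ zero_le
    have : μ (⋃ x ∈ s, Metric.ball x (1/2)) = 0 :=
      (measure_biUnion_null_iff hs_count).mpr fun x _ => (hb x (1/2)).trans hzero
    calc μ Set.univ ≤ μ (⋃ x ∈ s, Metric.ball x (1/2)) := measure_mono hcover
      _ = 0 := this
  exact Measure.measure_univ_eq_zero.mp huniv
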